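/- Let G be a group, x ∈ G, and G' the commutator subgroup of G. Define Q̃ = {(a,g) ∈ G × G' : a = g⁻¹xg}. Then Q̃ is closed under the operations (a,g) ◃ (b,h) := (b⁻¹ab, g·a⁻¹·b) and (a,g) ◃⁻¹ (b,h) := (b·a·b⁻¹, g·a·b⁻¹) (i.e. these formulas again yield elements of Q̃), and these operations make Q̃ a quandle: z ◃ z = z for all z ∈ Q̃; (z ◃ w) ◃⁻¹ w = z = (z ◃⁻¹ w) ◃ w for all z, w ∈ Q̃; and (z ◃ w) ◃ u = (z ◃ u) ◃ (w ◃ u) for all z, w, u ∈ Q̃. -/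

import Mathlib

open scoped commutatorElement

private lemma comm_aux {G : Type*} [Group G] (y g h : G)
    (hg : g ∈ commutator G) (hh : h ∈ commutator G) :
    y⁻¹ * g * h⁻¹ * y * h ∈ commutator G := by
  have h1 : ⁅y⁻¹, g * h⁻¹⁆ ∈ commutator G := by
    rw [commutator_def]
    exact Subgroup.commutator_mem_commutator (Subgroup.mem_top _) (Subgroup.mem_top _)
  have : y⁻¹ * g * h⁻¹ * y * h = ⁅y⁻¹, g * h⁻¹⁆ * g := by
    simp [commutatorElement_def]; group
  rw [this]
  exact mul_mem h1 hg

/-- The covering quandle `Q̃ = {(a,g) ∈ G × G' : a = g⁻¹xg}` is closed under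
the operations `(a,g) ◃ (b,h) = (b⁻¹ab, g·a⁻¹·b)` and `(a,g) ◃⁻¹ (b,h) = (bab⁻¹, g·a·b⁻¹)`,
and these operations satisfy the quandle axioms (Q1), (Q2), (Q3) on `Q̃`. -/
theorem stmt_0 {G : Type*} [Group G] (x : G)
    (Qt : Set (G × G))
    (hQt : Qt = {z : G × G | z.2 ∈ commutator G ∧ z.1 = z.2⁻¹ * x * z.2})
    (op opInv : G × G → G × G → G × G)
    (hop : ∀ z w : G × G, op z w = (w.1⁻¹ * z.1 * w.1, z.2 * z.1⁻¹ * w.1))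
    (hopInv : ∀ z w : G × G, opInv z w = (w.1 * z.1 * w.1⁻¹, z.2 * z.1 * w.1⁻¹)) :
    (∀ z ∈ Qt, ∀ w ∈ Qt, op z w ∈ Qt ∧ opInv z w ∈ Qt) ∧
    (∀ z ∈ Qt, op z z = z) ∧
    (∀ z ∈ Qt, ∀ w ∈ Qt, opInv (op z w) w = z ∧ op (opInv z w) w = z) ∧
    (∀ z ∈ Qt, ∀ w ∈ Qt, ∀ u ∈ Qt, op (op z w) u = op (op z u) (op w u)) := by
  subst hQt
  refine ⟨?_, ?_, ?_, ?_⟩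
  · rintro ⟨a, g⟩ ⟨hg, ha⟩ ⟨b, h⟩ ⟨hh, hb⟩
    simp only [Set.mem_setOf_eq, hop, hopInv]
    simp only [Set.mem_setOf_eq] at ha hb hg hh
    refine ⟨⟨?_, ?_⟩, ?_, ?_⟩
    · have : g * a⁻¹ * b = x⁻¹ * g * h⁻¹ * x * h := by rw [ha, hb]; group
      rw [this]; exact comm_aux x g h hg hh
    · rw [ha, hb]; group
    · have : g * a * b⁻¹ = x⁻¹⁻¹ * g * h⁻¹ * x⁻¹ * h := by rw [ha, hb]; group
      rw [this]; exact comm_aux x⁻¹ g h hg hh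
    · rw [ha, hb]; group
  · rintro ⟨a, g⟩ _
    simp only [hop, Prod.mk.injEq]
    constructor <;> group
  · rintro ⟨a, g⟩ _ ⟨b, h⟩ _
    simp only [hop, hopInv, Prod.mk.injEq]
    refine ⟨⟨?_, ?_⟩, ?_, ?_⟩ <;> group
  · rintro ⟨a, g⟩ _ ⟨b, h⟩ _ ⟨c, k⟩ _
    simp only [hop, Prod.mk.injEq]
    constructor <;> group
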